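/- Let F : ℝ → ℝ → ℝ → ℝ → ℝ be such that for every x > 0 and every v, q ∈ ℝ there exists X ∈ ℝ with F(x, v, q, X) > 0 (for instance, F continuous, degenerate elliptic with F(x,v,q,·) unbounded above). Let V : ℝ → ℝ be concave on (0,∞) and a viscosity subsolution of F(x, u, u', u'') = 0 on (0,∞), meaning: for every x₀ > 0 and every twice continuously differentiable ψ : ℝ → ℝ with ψ(x₀) = V(x₀) and V(x) ≤ ψ(x) for all x in some neighborhood of x₀ contained in (0,∞), one has F(x₀, V(x₀), ψ'(x₀), ψ''(x₀)) ≤ 0. Then V is differentiable at every point of (0,∞); equivalently, the left and right derivatives of V agree at every x₀ > 0. -/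

import Mathlib

set_option maxHeartbeats 1000000

open Set Filter

/-- Smooth-fit Lemma A-3: a concave viscosity subsolution of
`F(x, u, u', u'') = 0` on `(0,∞)`, where `F(x,v,q,·)` takes a positive value for
every `x > 0` and `v, q ∈ ℝ`, is differentiable at every point of `(0,∞)`. -/
theorem viscosity_subsolution_differentiable
    (F : ℝ → ℝ → ℝ → ℝ → ℝ)
    (hF : ∀ x > (0 : ℝ), ∀ v q : ℝ, ∃ X : ℝ, 0 < F x v q X)
    (V : ℝ → ℝ)
    (hV : ConcaveOn ℝ (Set.Ioi 0) V)
    (hsub : ∀ x₀ > (0 : ℝ), ∀ ψ : ℝ → ℝ, ContDiff ℝ 2 ψ → ψ x₀ = V x₀ →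
      (∃ ε > (0 : ℝ), Metric.ball x₀ ε ⊆ Set.Ioi 0 ∧
        ∀ x ∈ Metric.ball x₀ ε, V x ≤ ψ x) →
      F x₀ (V x₀) (deriv ψ x₀) (deriv (deriv ψ) x₀) ≤ 0) :
    ∀ x₀ > (0 : ℝ), DifferentiableAt ℝ V x₀ := by
  intro x₀ hx₀
  set g : ℝ → ℝ := fun x => -V x with hg_def
  have hg : ConvexOn ℝ (Set.Ioi 0) g := hV.neg
  set S : ℝ → ℝ := slope g x₀ with hS_def
  have hSdef : ∀ x : ℝ, S x = (g x - g x₀) / (x - x₀) := by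
    intro x; rw [hS_def, slope_def_field]
  -- monotonicity of slopes
  have hmono : ∀ x y : ℝ, x ∈ Set.Ioi (0:ℝ) → y ∈ Set.Ioi (0:ℝ) → x ≠ x₀ → y ≠ x₀ →
      x ≤ y → S x ≤ S y := by
    intro x y hx hy hxne hyne hxy
    rw [hSdef, hSdef]
    exact hg.secant_mono hx₀ hx hy hxne hyne hxy
  set A : ℝ := sSup (S '' Set.Ioo (x₀/2) x₀) with hA_def
  set B : ℝ := sInf (S '' Set.Ioo x₀ (x₀+1)) with hB_def
  have hx₀2 : (0:ℝ) < x₀/2 := by linarith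
  have hneL : (Set.Ioo (x₀/2) x₀).Nonempty := by
    refine ⟨x₀ * 3 / 4, by constructor <;> [skip; skip] <;> nlinarith⟩
  have hneR : (Set.Ioo x₀ (x₀+1)).Nonempty := ⟨x₀ + 1/2, by constructor <;> linarith⟩
  have hmemL : ∀ x ∈ Set.Ioo (x₀/2) x₀, x ∈ Set.Ioi (0:ℝ) ∧ x ≠ x₀ := by
    intro x hx; exact ⟨lt_trans hx₀2 hx.1, ne_of_lt hx.2⟩
  have hmemR : ∀ x ∈ Set.Ioo x₀ (x₀+1), x ∈ Set.Ioi (0:ℝ) ∧ x ≠ x₀ := by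
    intro x hx; exact ⟨lt_trans hx₀ hx.1, (ne_of_gt hx.1)⟩
  -- left image bounded above by any right slope
  have hLleR : ∀ x ∈ Set.Ioo (x₀/2) x₀, ∀ y ∈ Set.Ioo x₀ (x₀+1), S x ≤ S y := by
    intro x hx y hy
    obtain ⟨hx1, hx2⟩ := hmemL x hx
    obtain ⟨hy1, hy2⟩ := hmemR y hy
    exact hmono x y hx1 hy1 hx2 hy2 (le_of_lt (lt_trans hx.2 hy.1))
  have hbddL : BddAbove (S '' Set.Ioo (x₀/2) x₀) := by
    obtain ⟨y, hy⟩ := hneR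
    exact ⟨S y, by rintro _ ⟨x, hx, rfl⟩; exact hLleR x hx y hy⟩
  have hbddR : BddBelow (S '' Set.Ioo x₀ (x₀+1)) := by
    obtain ⟨x, hx⟩ := hneL
    exact ⟨S x, by rintro _ ⟨y, hy, rfl⟩; exact hLleR x hx y hy⟩
  have hSleA : ∀ x ∈ Set.Ioo (x₀/2) x₀, S x ≤ A :=
    fun x hx => le_csSup hbddL ⟨x, hx, rfl⟩
  have hBleS : ∀ y ∈ Set.Ioo x₀ (x₀+1), B ≤ S y :=
    fun y hy => csInf_le hbddR ⟨y, hy, rfl⟩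
  have hAB : A ≤ B := by
    refine le_csInf (hneR.image _) ?_
    rintro _ ⟨y, hy, rfl⟩
    exact csSup_le (hneL.image _) (by rintro _ ⟨x, hx, rfl⟩; exact hLleR x hx y hy)
  rcases eq_or_lt_of_le hAB with hABeq | hABlt
  · -- A = B : slopes converge, g differentiable
    have hmonoL : MonotoneOn S (Set.Ioo (x₀/2) x₀) := by
      intro x hx y hy hxy
      exact hmono x y (hmemL x hx).1 (hmemL y hy).1 (hmemL x hx).2 (hmemL y hy).2 hxy
    have hmonoR : MonotoneOn S (Set.Ioo x₀ (x₀+1)) := by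
      intro x hx y hy hxy
      exact hmono x y (hmemR x hx).1 (hmemR y hy).1 (hmemR x hx).2 (hmemR y hy).2 hxy
    have htL : Tendsto S (nhdsWithin x₀ (Set.Iio x₀)) (nhds A) :=
      MonotoneOn.tendsto_nhdsWithin_Ioo_left hneL hmonoL hbddL
    have htR : Tendsto S (nhdsWithin x₀ (Set.Ioi x₀)) (nhds B) :=
      MonotoneOn.tendsto_nhdsWithin_Ioo_right hneR hmonoR hbddR
    have ht : Tendsto S (nhdsWithin x₀ {x₀}ᶜ) (nhds A) := by
      rw [← nhdsLT_sup_nhdsGT]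
      exact tendsto_sup.2 ⟨htL, hABeq ▸ htR⟩
    have hd : HasDerivAt g A x₀ := hasDerivAt_iff_tendsto_slope.2 ht
    have : DifferentiableAt ℝ g x₀ := hd.differentiableAt
    have := this.neg
    simpa [hg_def] using this
  · -- A < B : corner; build a quadratic test function and contradict hF
    exfalso
    set δ : ℝ := (B - A) / 2 with hδ_def
    have hδpos : 0 < δ := by simp [hδ_def]; linarith
    set m : ℝ := (A + B) / 2 with hm_def
    set η : ℝ := -m with hη_def
    obtain ⟨X, hX⟩ := hF x₀ hx₀ (V x₀) η
    set α : ℝ := X / 2 with hα_def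
    set ψ : ℝ → ℝ := fun x => V x₀ + η * (x - x₀) + α * (x - x₀)^2 with hψ_def
    have hψcd : ContDiff ℝ 2 ψ := by
      apply ContDiff.add
      · exact contDiff_const.add (contDiff_const.mul ((contDiff_id.sub contDiff_const)))
      · exact contDiff_const.mul ((contDiff_id.sub contDiff_const).pow 2)
    have hψx₀ : ψ x₀ = V x₀ := by simp [hψ_def]
    -- derivative computations
    have hψd : ∀ x : ℝ, HasDerivAt ψ (η + α * (2 * (x - x₀))) x := by
      intro x
      have h1 : HasDerivAt (fun y : ℝ => y - x₀) 1 x := (hasDerivAt_id x).sub_const x₀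
      have h2 : HasDerivAt (fun y : ℝ => (y - x₀)^2) (2 * (x - x₀)) x := by
        simpa using h1.fun_pow 2
      have h3 : HasDerivAt (fun y : ℝ => V x₀ + η * (y - x₀)) (η * 1) x :=
        (h1.const_mul η).const_add (V x₀)
      simpa [hψ_def, mul_one] using h3.fun_add (h2.const_mul α)
    have hderiv1 : deriv ψ = fun x => η + α * (2 * (x - x₀)) := by
      funext x; exact (hψd x).deriv
    have hderivψx₀ : deriv ψ x₀ = η := by simp [hderiv1]
    have hderiv2 : deriv (deriv ψ) x₀ = X := by
      rw [hderiv1]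
      have h1 : HasDerivAt (fun y : ℝ => y - x₀) 1 x₀ := (hasDerivAt_id x₀).sub_const x₀
      have h2 : HasDerivAt (fun y : ℝ => η + α * (2 * (y - x₀))) (α * 2) x₀ := by
        simpa [mul_assoc] using ((h1.const_mul (2:ℝ)).const_mul α).const_add η
      rw [h2.deriv, hα_def]; ring
    -- the touching neighborhood
    set ε : ℝ := min (min (x₀/2) 1) (δ / (|α| + 1)) with hε_def
    have hαpos : (0:ℝ) < |α| + 1 := by positivity
    have hεpos : 0 < ε := by
      apply lt_min (lt_min hx₀2 one_pos)
      positivity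
    have hεle1 : ε ≤ 1 := le_trans (min_le_left _ _) (min_le_right _ _)
    have hεlex : ε ≤ x₀/2 := le_trans (min_le_left _ _) (min_le_left _ _)
    have hεleδ : ε ≤ δ / (|α| + 1) := min_le_right _ _
    have hball : Metric.ball x₀ ε ⊆ Set.Ioi 0 := by
      intro x hx
      rw [Metric.mem_ball, Real.dist_eq] at hx
      have := abs_lt.1 hx
      simp only [Set.mem_Ioi]
      linarith [this.1, hεlex]
    have htouch : ∀ x ∈ Metric.ball x₀ ε, V x ≤ ψ x := by
      intro x hx
      rw [Metric.mem_ball, Real.dist_eq] at hx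
      have habs := abs_lt.1 hx
      -- key slope estimate: g x - g x₀ ≥ m*(x-x₀) + δ*|x-x₀|
      have hkey : g x₀ + m * (x - x₀) + δ * |x - x₀| ≤ g x := by
        rcases lt_trichotomy x x₀ with hlt | heq | hgt
        · have hxmem : x ∈ Set.Ioo (x₀/2) x₀ := ⟨by linarith [habs.1, hεlex], hlt⟩
          have hs := hSleA x hxmem
          rw [hSdef] at hs
          have hne : x - x₀ < 0 := by linarith
          have hAm : A = m - δ := by rw [hm_def, hδ_def]; ring
          have : g x - g x₀ ≥ A * (x - x₀) := by
            rw [div_le_iff_of_neg hne] at hs; linarith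
          have habs2 : |x - x₀| = -(x - x₀) := abs_of_neg hne
          rw [habs2, mul_neg]
          rw [hAm, sub_mul] at this
          linarith
        · simp [heq]
        · have hxmem : x ∈ Set.Ioo x₀ (x₀+1) := ⟨hgt, by linarith [habs.2, hεle1]⟩
          have hs := hBleS x hxmem
          rw [hSdef] at hs
          have hne : 0 < x - x₀ := by linarith
          have hBm : B = m + δ := by rw [hm_def, hδ_def]; ring
          have : g x - g x₀ ≥ B * (x - x₀) := by
            rw [le_div_iff₀ hne] at hs; linarith
          have habs2 : |x - x₀| = x - x₀ := abs_of_pos hne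
          rw [habs2]
          rw [hBm, add_mul] at this
          linarith
      -- quadratic term is dominated
      have hquad : -α * (x - x₀)^2 ≤ δ * |x - x₀| := by
        set t : ℝ := |x - x₀| with ht_def
        have htnn : 0 ≤ t := abs_nonneg _
        have hsq : (x - x₀)^2 = t * t := by rw [ht_def, abs_mul_abs_self]; ring
        have h1 : -α * (x - x₀)^2 ≤ |α| * (x - x₀)^2 :=
          mul_le_mul_of_nonneg_right (neg_le_abs α) (sq_nonneg _)
        have h4 : t < δ / (|α| + 1) := lt_of_lt_of_le hx hεleδ
        have h5 : |α| * (x - x₀)^2 ≤ ((|α| + 1) * t) * t := by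
          rw [hsq]
          have : |α| * (t * t) ≤ (|α| + 1) * t * t := by nlinarith [abs_nonneg α]
          linarith
        have h6 : (|α| + 1) * t ≤ δ := by
          rw [lt_div_iff₀ hαpos] at h4
          linarith
        calc -α * (x - x₀)^2 ≤ ((|α| + 1) * t) * t := le_trans h1 h5
          _ ≤ δ * t := mul_le_mul_of_nonneg_right h6 htnn
      -- combine
      have hVx : V x = -g x := by simp [hg_def]
      have hgV : g x₀ = -V x₀ := by simp [hg_def]
      have hψval : ψ x = V x₀ + (-m) * (x - x₀) + α * (x - x₀)^2 := rfl
      rw [hVx, hψval]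
      linarith [hkey, hquad, hgV]
    have := hsub x₀ hx₀ ψ hψcd hψx₀ ⟨ε, hεpos, hball, htouch⟩
    rw [hderivψx₀, hderiv2] at this
    linarith
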